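/- Let n = 2m, u ∈ GF(2^n) with u^(2^m+1) = 1 and u ∉ GF(2^m), w = u + u^(2^m), b ∈ GF(2^n)*, a = b^(2^m+1), c = a^(1/2) + Tr^n_m(b·u^(2^m)). Then for all z ∈ GF(2^m) with z^2 + wz + 1 ≠ 0: c + (awz)^(1/2) + b w^2 (u^(2^m) + z)/(u + z)^2 + b^(2^m) w^2 (u + z)/(u^(2^m) + z)^2 = a^(1/2) + Tr^n_m(b^(2^m) u^5) + (awz)^(1/2) + [Tr^n_m(b^(2^m)(u^5+u)) z^4 + Tr^n_m(b) w^2 z^3 + Tr^n_m(b^(2^m) u^5) w^2 z^2 + Tr^n_m(b^(2^m)(u^4+1)) z] / (z^2 + wz + 1)^2. -/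

import Mathlib

theorem frob_add {F : Type*} [Field F] (h2 : (2:F) = 0) (m : ℕ) (x y : F) :
    (x + y) ^ (2 ^ m) = x ^ (2 ^ m) + y ^ (2 ^ m) := by
  induction m with
  | zero => simp
  | succ k ih =>
    rw [pow_succ, pow_mul, pow_mul, pow_mul, ih]
    linear_combination (x ^ (2^k) * y ^ (2^k)) * h2

set_option maxHeartbeats 2000000 in

/-- Let `n = 2m`, `u ∈ GF(2^n) \ GF(2^m)` with `u^(2^m+1) = 1`, `w = u + u^(2^m)`,
`b ∈ GF(2^n)*`, `a = b^(2^m+1)`, `c = a^(1/2) + Tr^n_m(b·u^(2^m))` (square roots being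
`x ↦ x^(2^(2m−1))`). Then for all `z ∈ GF(2^m)` with `z² + wz + 1 ≠ 0`:
`c + (awz)^(1/2) + b w² (u^(2^m) + z)/(u + z)² + b^(2^m) w² (u + z)/(u^(2^m) + z)²
 = a^(1/2) + Tr^n_m(b^(2^m) u⁵) + (awz)^(1/2)
   + [Tr^n_m(b^(2^m)(u⁵+u)) z⁴ + Tr^n_m(b) w² z³ + Tr^n_m(b^(2^m) u⁵) w² z²
      + Tr^n_m(b^(2^m)(u⁴+1)) z] / (z² + wz + 1)²`. -/
theorem stmt_19 (m : ℕ) (hm : 0 < m) (F : Type*) [Field F] [Fintype F]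
    (hcard : Fintype.card F = 2 ^ (2 * m))
    (u : F) (hu1 : u ^ (2 ^ m + 1) = 1) (hu : u ^ (2 ^ m) ≠ u)
    (w : F) (hw : w = u + u ^ (2 ^ m))
    (b : F) (hb : b ≠ 0) (a : F) (ha : a = b ^ (2 ^ m + 1))
    (c : F) (hc : c = a ^ (2 ^ (2 * m - 1)) + (b * u ^ (2 ^ m) + (b * u ^ (2 ^ m)) ^ (2 ^ m))) :
    ∀ z : F, z ^ (2 ^ m) = z → z ^ 2 + w * z + 1 ≠ 0 →
      c + (a * w * z) ^ (2 ^ (2 * m - 1)) +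
        b * w ^ 2 * (u ^ (2 ^ m) + z) / (u + z) ^ 2 +
        b ^ (2 ^ m) * w ^ 2 * (u + z) / (u ^ (2 ^ m) + z) ^ 2 =
      a ^ (2 ^ (2 * m - 1)) + (b ^ (2 ^ m) * u ^ 5 + (b ^ (2 ^ m) * u ^ 5) ^ (2 ^ m)) +
        (a * w * z) ^ (2 ^ (2 * m - 1)) +
        ((b ^ (2 ^ m) * (u ^ 5 + u) + (b ^ (2 ^ m) * (u ^ 5 + u)) ^ (2 ^ m)) * z ^ 4 +
          (b + b ^ (2 ^ m)) * w ^ 2 * z ^ 3 +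
          (b ^ (2 ^ m) * u ^ 5 + (b ^ (2 ^ m) * u ^ 5) ^ (2 ^ m)) * w ^ 2 * z ^ 2 +
          (b ^ (2 ^ m) * (u ^ 4 + 1) + (b ^ (2 ^ m) * (u ^ 4 + 1)) ^ (2 ^ m)) * z) /
          (z ^ 2 + w * z + 1) ^ 2 := by
  intro z hz hz0
  -- characteristic 2
  have hcast : ((Fintype.card F : ℕ) : F) = 0 := FiniteField.cast_card_eq_zero F
  rw [hcard] at hcast
  push_cast at hcast
  have h2 : (2 : F) = 0 := by
    have := pow_eq_zero_iff (n := 2 * m) (by omega) |>.mp hcast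
    exact this
  -- x^(2^m) squared is identity
  have hqq : ∀ x : F, (x ^ (2 ^ m)) ^ (2 ^ m) = x := by
    intro x
    rw [← pow_mul, ← pow_add, ← two_mul, ← hcard, FiniteField.pow_card]
  set v : F := u ^ (2 ^ m) with hv
  have huv : u * v = 1 := by rw [hv, ← pow_succ']; exact hu1
  have hvq : v ^ (2 ^ m) = u := hqq u
  have hbq : (b ^ (2 ^ m)) ^ (2 ^ m) = b := hqq b
  set B : F := b ^ (2 ^ m) with hB
  have e1 : (b * v) ^ (2 ^ m) = B * u := by rw [mul_pow, hvq]
  have e2 : (B * u ^ 5) ^ (2 ^ m) = b * v ^ 5 := by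
    rw [mul_pow, hbq, ← pow_mul, mul_comm 5, pow_mul]
  have e3 : (B * (u ^ 5 + u)) ^ (2 ^ m) = b * (v ^ 5 + v) := by
    rw [mul_pow, hbq, frob_add h2, ← pow_mul, mul_comm 5, pow_mul]
  have e4 : (B * (u ^ 4 + 1)) ^ (2 ^ m) = b * (v ^ 4 + 1) := by
    rw [mul_pow, hbq, frob_add h2, ← pow_mul, mul_comm 4, pow_mul, one_pow]
  have hfac : z ^ 2 + w * z + 1 = (u + z) * (v + z) := by
    rw [hw]; linear_combination -huv
  have hne1 : u + z ≠ 0 := by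
    intro h; apply hz0; rw [hfac, h, zero_mul]
  have hne2 : v + z ≠ 0 := by
    intro h; apply hz0; rw [hfac, h, mul_zero]
  rw [hc, e1, e2, e3, e4, hfac, hw]
  clear_value v B
  have key : (b*v + B*u - (B*u^5 + b*v^5))*((u+z)*(v+z))^2 + b*(u+v)^2*(v+z)^3 + B*(u+v)^2*(u+z)^3 - ((B*(u^5+u) + b*(v^5+v))*z^4 + (b+B)*(u+v)^2*z^3 + (B*u^5+b*v^5)*(u+v)^2*z^2 + (B*(u^4+1)+b*(v^4+1))*z) = 0 := by
    linear_combination ((5:F)*z*B + (5:F)*z*b + (2:F)*z^3*B + (2:F)*z^3*b + (2:F)*v*b + (4:F)*v*z^2*B + (10:F)*v*z^2*b + (8:F)*v^2*z*b + (2:F)*v^3*b + (-2:F)*v^3*z^2*b + (-2:F)*v^4*z*b + (-2:F)*v^4*z^3*b + (-1:F)*v^5*b + (-6:F)*v^5*z^2*b + (-2:F)*v^6*z*b + (2:F)*u*B + (10:F)*u*z^2*B + (4:F)*u*z^2*b + (5:F)*u*v*z*B + (5:F)*u*v*z*b + (2:F)*u*v^2*b + (-2:F)*u*v^4*z^2*b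 + (-2:F)*u*v^5*z*b + (-1:F)*u*v^6*b + (8:F)*u^2*z*B + (2:F)*u^2*v*B + (2:F)*u^3*B + (-2:F)*u^3*z^2*B + (-2:F)*u^4*z*B + (-2:F)*u^4*z^3*B + (-2:F)*u^4*v*z^2*B + (-1:F)*u^5*B + (-6:F)*u^5*z^2*B + (-2:F)*u^5*v*z*B + (-2:F)*u^6*z*B + (-1:F)*u^6*v*B) * huv + ((2:F)*z*B + (2:F)*z*b + (1:F)*z^3*B + (1:F)*z^3*b + (1:F)*v*b + (2:F)*v*z^2*B + (5:F)*v*z^2*b + (4:F)*v^2*z*b + (1:F)*v^2*z^3*b + (1:F)*v^3*b + (1:F)*v^3*z^2*b + (-1:F)*v^4*z^3*b + (-3:F)*v^5*z^2*b + (-1:F)*v^5*z^4*b + (-1:F)*v^6*z*b + (-1:F)*v^6*z^3*b + (-1:F)*v^7*z^2*b + (1:F)*u*B + (5:F)*u*z^2*B + (2:F)*u*z^2*b + (4:F)*u^2*z*B + (1:F)*u^2*z^3*B + (1:F)*u^3*B + (1:F)*u^3*z^2*B + (-1:F)*u^4*z^3*B + (-3:F)*u^5*z^2*B + (-1:F)*u^5*z^4*B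 + (-1:F)*u^6*z*B + (-1:F)*u^6*z^3*B + (-1:F)*u^7*z^2*B) * h2
  rw [← sub_eq_zero]
  suffices hs : ∀ t : F, t = ((b*v + B*u - (B*u^5 + b*v^5))*((u+z)*(v+z))^2 + b*(u+v)^2*(v+z)^3 + B*(u+v)^2*(u+z)^3 - ((B*(u^5+u) + b*(v^5+v))*z^4 + (b+B)*(u+v)^2*z^3 + (B*u^5+b*v^5)*(u+v)^2*z^2 + (B*(u^4+1)+b*(v^4+1))*z)) / ((u+z)*(v+z))^2 → t = 0 by
    apply hs; field_simp; ring
  intro t ht; rw [ht, key, zero_div]
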